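/- Let q, j be integers with 1 ≤ j ≤ q, let δ > 0 be real, set δ* = (q+1−j)/j, and let x > 0 be a real number with P(x) = 0. Then Q'(x) = (q+1)·x^q − j·(1+δ)·x^{j−1} is strictly positive if δ > δ*, and strictly negative if δ < δ*. -/

import Mathlib

lemma rolle_aux (q j : ℕ) (hj : 1 ≤ j) (hjq : j ≤ q) (δ : ℝ)
    (x : ℝ) (hx : 0 < x) (hx1 : x ≠ 1)
    (hQ : x ^ (q+1) - (1+δ) * x ^ j + δ = 0) :
    ∃ c : ℝ, 0 < c ∧ ((q:ℝ)+1) * c ^ (q+1-j) = j * (1+δ) ∧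
      ((x < 1 ∧ x < c ∧ c < 1) ∨ (1 < x ∧ 1 < c ∧ c < x)) := by
  set f : ℝ → ℝ := fun t => t ^ (q+1) - (1+δ) * t ^ j + δ with hf
  have hd : ∀ t : ℝ, HasDerivAt f (((q:ℝ)+1) * t ^ q - (1+δ) * (j * t ^ (j-1))) t := by
    intro t
    have h1 := hasDerivAt_pow (q+1) t
    have h2 := (hasDerivAt_pow j t).const_mul (1+δ)
    have := (h1.sub h2).add_const δ
    simpa [hf] using this
  have hcont : Continuous f := by fun_prop
  have hf1 : f 1 = 0 := by simp [hf]
  have hfx : f x = 0 := hQ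
  have key : ∀ c : ℝ, 0 < c → deriv f c = 0 →
      ((q:ℝ)+1) * c ^ (q+1-j) = j * (1+δ) := by
    intro c hc0 hdc
    rw [(hd c).deriv] at hdc
    have hcq : c ^ q = c ^ (q+1-j) * c ^ (j-1) := by
      rw [← pow_add]; congr 1; omega
    rw [hcq] at hdc
    have hne : c ^ (j-1) ≠ 0 := pow_ne_zero _ (ne_of_gt hc0)
    apply mul_right_cancel₀ hne
    linear_combination hdc
  rcases lt_or_gt_of_ne hx1 with h | h
  · obtain ⟨c, hcmem, hdc⟩ := exists_deriv_eq_zero h hcont.continuousOn (by rw [hfx, hf1])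
    exact ⟨c, lt_trans hx hcmem.1, key c (lt_trans hx hcmem.1) hdc,
      Or.inl ⟨h, hcmem.1, hcmem.2⟩⟩
  · obtain ⟨c, hcmem, hdc⟩ := exists_deriv_eq_zero h hcont.continuousOn (by rw [hfx, hf1])
    exact ⟨c, lt_trans one_pos hcmem.1, key c (lt_trans one_pos hcmem.1) hdc,
      Or.inr ⟨h, hcmem.1, hcmem.2⟩⟩

/-- at a positive root `x` of `P`, the derivative
`Q'(x) = (q+1)·x^q − j·(1+δ)·x^{j−1}` is positive if `δ > δ*` and negative if
`δ < δ*`, where `δ* = (q+1−j)/j`. -/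
theorem stmt_4 (q j : ℕ) (hj : 1 ≤ j) (hjq : j ≤ q) (δ : ℝ) (hδ : 0 < δ)
    (x : ℝ) (hx : 0 < x)
    (hroot : (∑ k ∈ Finset.Icc j q, x ^ k) - δ * ∑ k ∈ Finset.range j, x ^ k = 0) :
    (((q : ℝ) + 1 - j) / j < δ →
      0 < ((q : ℝ) + 1) * x ^ q - (j : ℝ) * (1 + δ) * x ^ (j - 1)) ∧
    (δ < ((q : ℝ) + 1 - j) / j →
      ((q : ℝ) + 1) * x ^ q - (j : ℝ) * (1 + δ) * x ^ (j - 1) < 0) := by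
  have hj0 : (0:ℝ) < j := by exact_mod_cast hj
  have hIcc : ∑ k ∈ Finset.Icc j q, x ^ k
      = ∑ k ∈ Finset.range (q+1), x ^ k - ∑ k ∈ Finset.range j, x ^ k := by
    rw [← Finset.Ico_add_one_right_eq_Icc, Finset.sum_Ico_eq_sub _ (by omega)]
  rw [hIcc] at hroot
  have h1 := geom_sum_mul x j
  have h2 := geom_sum_mul x (q+1)
  have hQ : x ^ (q+1) - (1+δ) * x ^ j + δ = 0 := by
    linear_combination (x-1) * hroot - h2 + (1+δ) * h1
  have hxj1 : 0 < x ^ (j-1) := pow_pos hx _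
  have hxq : x ^ q = x ^ (q+1-j) * x ^ (j-1) := by rw [← pow_add]; congr 1; omega
  have hone : ∀ hx1 : x = 1, ((q:ℝ) + 1) - j - δ * j = 0 := by
    intro hx1
    rw [hx1] at hroot
    simpa using hroot
  constructor
  · intro hgt
    have hδj : (q:ℝ) + 1 - j < δ * j := by
      rw [div_lt_iff₀ hj0] at hgt; linarith
    have hx1 : x ≠ 1 := fun h => by have := hone h; linarith
    obtain ⟨c, hc0, hkey, hcase⟩ := rolle_aux q j hj hjq δ x hx hx1 hQ
    rcases hcase with ⟨_, _, hc1⟩ | ⟨_, h1c, hcx⟩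
    · exfalso
      have hlt : c ^ (q+1-j) < 1 := pow_lt_one₀ hc0.le hc1 (by omega)
      nlinarith [mul_lt_mul_of_pos_left hlt (show (0:ℝ) < (q:ℝ)+1 by positivity)]
    · have hcx' : c ^ (q+1-j) < x ^ (q+1-j) := pow_lt_pow_left₀ hcx hc0.le (by omega)
      have h5 : (j:ℝ) * (1+δ) < ((q:ℝ)+1) * x ^ (q+1-j) := by
        nlinarith [mul_lt_mul_of_pos_left hcx' (show (0:ℝ) < (q:ℝ)+1 by positivity)]
      have h6 := mul_lt_mul_of_pos_right h5 hxj1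
      rw [hxq]
      nlinarith [h6]
  · intro hlt
    have hδj : δ * j < (q:ℝ) + 1 - j := by
      rw [lt_div_iff₀ hj0] at hlt; linarith
    have hx1 : x ≠ 1 := fun h => by have := hone h; linarith
    obtain ⟨c, hc0, hkey, hcase⟩ := rolle_aux q j hj hjq δ x hx hx1 hQ
    rcases hcase with ⟨_, hxc, hc1⟩ | ⟨_, h1c, hcx⟩
    · have hcx' : x ^ (q+1-j) < c ^ (q+1-j) := pow_lt_pow_left₀ hxc hx.le (by omega)
      have h5 : ((q:ℝ)+1) * x ^ (q+1-j) < (j:ℝ) * (1+δ) := by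
        nlinarith [mul_lt_mul_of_pos_left hcx' (show (0:ℝ) < (q:ℝ)+1 by positivity)]
      have h6 := mul_lt_mul_of_pos_right h5 hxj1
      rw [hxq]
      nlinarith [h6]
    · exfalso
      have hlt1 : (1:ℝ) < c ^ (q+1-j) := one_lt_pow₀ h1c (by omega)
      nlinarith [mul_lt_mul_of_pos_left hlt1 (show (0:ℝ) < (q:ℝ)+1 by positivity)]
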